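/- For every guarded string w = α₁p₁α₂...α_n there is an interpretation on the state set S = {1,...,n} (with τ_w(t) = {i : t ∈ α_i} and σ_w(p) = {(i,i+1) : p_i = p}) such that for every KAT expression e, w ∈ L(e) if and only if (1,n) ∈ R⟦e⟧ under this interpretation. Consequently, if R⟦e⟧ = R⟦f⟧ under all interpretations then L(e) = L(f). -/

import Mathlib

/-- A guarded string candidate: a list of atoms (sets of tests) and actions. -/
abbrev GList (A T : Type) := List (Set T ⊕ A)

/-- Guarded strings: nonempty alternating sequences starting and ending with an atom. -/
inductive IsGuarded {A T : Type} : GList A T → Prop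
  | single (α : Set T) : IsGuarded [Sum.inl α]
  | cons (α : Set T) (p : A) {l : GList A T} : IsGuarded l →
      IsGuarded (Sum.inl α :: Sum.inr p :: l)

/-- Guarded composition of guarded languages: fuse matching boundary atoms. -/
def gcomp {A T : Type} (L K : Set (GList A T)) : Set (GList A T) :=
  { z | ∃ (w : GList A T) (α : Set T) (x : GList A T),
      w ++ [Sum.inl α] ∈ L ∧ Sum.inl α :: x ∈ K ∧ z = w ++ Sum.inl α :: x }

/-- The language of all length-one guarded strings (all atoms). -/
def atomsLang {A T : Type} : Set (GList A T) := { w | ∃ α : Set T, w = [Sum.inl α] }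

/-- Iterated guarded composition. -/
def gpow {A T : Type} (L : Set (GList A T)) : ℕ → Set (GList A T)
  | 0 => atomsLang
  | n + 1 => gcomp L (gpow L n)

/-- Guarded star. -/
def gstar {A T : Type} (L : Set (GList A T)) : Set (GList A T) := ⋃ n, gpow L n

/-- Boolean (test) expressions over test variables T. -/
inductive BExp (T : Type) where
  | tru : BExp T
  | fls : BExp T
  | var (t : T) : BExp T
  | or (b c : BExp T) : BExp T
  | and (b c : BExp T) : BExp T
  | not (b : BExp T) : BExp T

/-- Satisfaction of a test by an atom (truth assignment). -/
def BExp.holds {T : Type} (α : Set T) : BExp T → Prop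
  | .tru => True
  | .fls => False
  | .var t => t ∈ α
  | .or b c => BExp.holds α b ∨ BExp.holds α c
  | .and b c => BExp.holds α b ∧ BExp.holds α c
  | .not b => ¬ BExp.holds α b

/-- The guarded language of a test. -/
def testLang {A T : Type} (b : BExp T) : Set (GList A T) :=
  { w | ∃ α : Set T, b.holds α ∧ w = [Sum.inl α] }

/-- KAT expressions over actions A and tests T. -/
inductive KExp (A T : Type) where
  | test (b : BExp T) : KExp A T
  | act (p : A) : KExp A T
  | plus (e f : KExp A T) : KExp A T
  | seq (e f : KExp A T) : KExp A T
  | star (e : KExp A T) : KExp A T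

/-- Language semantics of KAT. -/
def lang {A T : Type} : KExp A T → Set (GList A T)
  | .test b => testLang b
  | .act p => { w | ∃ α β : Set T, w = [Sum.inl α, Sum.inr p, Sum.inl β] }
  | .plus e f => lang e ∪ lang f
  | .seq e f => gcomp (lang e) (lang f)
  | .star e => gstar (lang e)

/-- Semantics of a test under a valuation τ on states S. -/
def bsem {T S : Type} (τ : T → Set S) : BExp T → Set S
  | .tru => Set.univ
  | .fls => ∅
  | .var t => τ t
  | .or b c => bsem τ b ∪ bsem τ c
  | .and b c => bsem τ b ∩ bsem τ c
  | .not b => (bsem τ b)ᶜ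

/-- Relational semantics of KAT under an interpretation (S, τ, σ). -/
def rsem {A T S : Type} (τ : T → Set S) (σ : A → S → S → Prop) : KExp A T → S → S → Prop
  | .test b => fun s s' => s = s' ∧ s ∈ bsem τ b
  | .act p => σ p
  | .plus e f => fun s s' => rsem τ σ e s s' ∨ rsem τ σ f s s'
  | .seq e f => fun s s' => ∃ s'', rsem τ σ e s s'' ∧ rsem τ σ f s'' s'
  | .star e => Relation.ReflTransGen (rsem τ σ e)

/-- A relation is a partial function. -/
def Functional {S : Type} (r : S → S → Prop) : Prop :=
  ∀ s s₁ s₂, r s s₁ → r s s₂ → s₁ = s₂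

/-- A KAT expression is deterministic: it maps functional interpretations to functional relations. -/
def DetExp {A T : Type} (e : KExp A T) : Prop :=
  ∀ (S : Type) (τ : T → Set S) (σ : A → S → S → Prop),
    (∀ p, Functional (σ p)) → Functional (rsem τ σ e)

/-- A guarded language is deterministic: no member is a proper prefix of another, and
any two distinct members first differ at an atom. -/
def DetLang {A T : Type} (L : Set (GList A T)) : Prop :=
  ∀ w ∈ L, ∀ x ∈ L, w ≠ x →
    ∃ (l w' x' : GList A T) (α β : Set T), α ≠ β ∧
      w = l ++ Sum.inl α :: w' ∧ x = l ++ Sum.inl β :: x'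

/-- The atom of a state: the set of tests true at it. -/
def atomOf {T S : Type} (τ : T → Set S) (s : S) : Set T := { t | s ∈ τ t }

/-- Labeled paths in an interpretation, together with their induced guarded strings. -/
inductive IsPath {A T S : Type} (τ : T → Set S) (σ : A → S → S → Prop) :
    S → GList A T → S → Prop
  | nil (s : S) : IsPath τ σ s [Sum.inl (atomOf τ s)] s
  | cons {s s' s'' : S} {p : A} {w : GList A T} :
      σ p s s' → IsPath τ σ s' w s'' →
      IsPath τ σ s (Sum.inl (atomOf τ s) :: Sum.inr p :: w) s''

/-- GKAT expressions. -/
inductive GExp (A T : Type) where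
  | assert (b : BExp T) : GExp A T
  | act (p : A) : GExp A T
  | seq (e f : GExp A T) : GExp A T
  | ite (b : BExp T) (e f : GExp A T) : GExp A T
  | whl (b : BExp T) (e : GExp A T) : GExp A T

/-- Language semantics of GKAT. -/
def glang {A T : Type} : GExp A T → Set (GList A T)
  | .assert b => testLang b
  | .act p => { w | ∃ α β : Set T, w = [Sum.inl α, Sum.inr p, Sum.inl β] }
  | .seq e f => gcomp (glang e) (glang f)
  | .ite b e f => gcomp (testLang b) (glang e) ∪ gcomp (testLang b.not) (glang f)
  | .whl b e => gcomp (gstar (gcomp (testLang b) (glang e))) (testLang b.not)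

/-- Output of a deterministic KAT automaton on a state and atom. -/
inductive Out (A Q : Type) where
  | accept : Out A Q
  | reject : Out A Q
  | step (p : A) (q : Q) : Out A Q

/-- Acceptance in a deterministic KAT automaton with transition function δ,
starting from dynamics γ. -/
inductive AccFrom {A T Q : Type} (δ : Q → Set T → Out A Q) :
    (Set T → Out A Q) → GList A T → Prop
  | accept {γ : Set T → Out A Q} {α : Set T} :
      γ α = Out.accept → AccFrom δ γ [Sum.inl α]
  | step {γ : Set T → Out A Q} {α : Set T} {p : A} {q : Q} {w : GList A T} :
      γ α = Out.step p q → AccFrom δ (δ q) w →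
      AccFrom δ γ (Sum.inl α :: Sum.inr p :: w)

/-- Brzozowski derivative of a language with respect to a word. -/
def dl {A T : Type} (L : Set (GList A T)) (u : GList A T) : Set (GList A T) :=
  { x | u ++ x ∈ L }

/-- An atom β over T₁ is 𝔱-consistent with an atom α over T₀. -/
def TConsistent {T₀ T₁ : Type} (𝔱 : T₀ → BExp T₁) (α : Set T₀) (β : Set T₁) : Prop :=
  ∀ t, t ∈ α ↔ (𝔱 t).holds β

/-- Atom-replacement relation induced by a test substitution 𝔱. -/
inductive TRel {A T₀ T₁ : Type} (𝔱 : T₀ → BExp T₁) : GList A T₀ → GList A T₁ → Prop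
  | nil : TRel 𝔱 [] []
  | atom {α : Set T₀} {β : Set T₁} {w : GList A T₀} {x : GList A T₁} :
      TConsistent 𝔱 α β → TRel 𝔱 w x → TRel 𝔱 (Sum.inl α :: w) (Sum.inl β :: x)
  | act {p : A} {w : GList A T₀} {x : GList A T₁} :
      TRel 𝔱 w x → TRel 𝔱 (Sum.inr p :: w) (Sum.inr p :: x)

/-- apply_𝔱 on guarded languages. -/
def applyT {A T₀ T₁ : Type} (𝔱 : T₀ → BExp T₁) (L : Set (GList A T₀)) : Set (GList A T₁) :=
  { x | ∃ w ∈ L, TRel 𝔱 w x }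

/-- Action-replacement relation induced by an action substitution 𝔰: each action is
replaced by a guarded string of 𝔰(p), fused with the surrounding atoms. -/
inductive SRel {A₀ A₁ T : Type} (𝔰 : A₀ → Set (GList A₁ T)) :
    GList A₀ T → GList A₁ T → Prop
  | single (α : Set T) : SRel 𝔰 [Sum.inl α] [Sum.inl α]
  | step {α β : Set T} {p : A₀} {u : GList A₁ T} {w : GList A₀ T} {x : GList A₁ T} :
      Sum.inl α :: u ++ [Sum.inl β] ∈ 𝔰 p →
      SRel 𝔰 (Sum.inl β :: w) (Sum.inl β :: x) →
      SRel 𝔰 (Sum.inl α :: Sum.inr p :: Sum.inl β :: w) (Sum.inl α :: u ++ Sum.inl β :: x)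

/-- apply^𝔰 on guarded languages. -/
def applyS {A₀ A₁ T : Type} (𝔰 : A₀ → Set (GList A₁ T)) (L : Set (GList A₀ T)) :
    Set (GList A₁ T) :=
  { x | ∃ w ∈ L, SRel 𝔰 w x }

/-- Builder for the guarded strings of the language L_k. -/
def buildLk {k : ℕ} : Fin k → Fin k → List (Fin k) → GList (Fin k) (Fin k)
  | cur, act, [] => [Sum.inl {cur}, Sum.inr act, Sum.inl {cur}]
  | cur, act, j :: rest => Sum.inl {cur} :: Sum.inr act :: buildLk j cur rest

/-- The language L_k of Definition 6.2. -/
def Lk (k : ℕ) (hk : 0 < k) : Set (GList (Fin k) (Fin k)) :=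
  { w | ∃ (i : Fin k) (rest : List (Fin k)),
      i ≠ ⟨0, hk⟩ ∧ List.Chain' (· ≠ ·) (i :: rest) ∧ w = buildLk i ⟨0, hk⟩ rest }

/-- k-density of a deterministic KAT automaton transition function. -/
def KDense {A T Q : Type} (δ : Q → Set T → Out A Q) (k : ℕ) : Prop :=
  ∃ (S : Fin k → Set Q) (α : Fin k → Set T) (pa : Q → Fin k → A),
    Function.Injective α ∧
    (∀ i, (S i).Nonempty) ∧
    (∀ i q, q ∈ S i → δ q (α i) = Out.accept) ∧
    (∀ i j q, i ≠ j → q ∈ S i → ∃ q' ∈ S j, δ q (α j) = Out.step (pa q j) q') ∧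
    (∀ i j m q q', q ∈ S i → q' ∈ S j → pa q m = pa q' m → i = j)

/-- The sequence of actions occurring in a guarded string. -/
def actsOf {A T : Type} (w : GList A T) : List A :=
  w.filterMap (fun x => match x with | .inl _ => none | .inr p => some p)

/-- The guarded language of a word over Σ: all guarded strings with that action sequence. -/
def wordLang {A T : Type} (ps : List A) : Set (GList A T) :=
  { w | IsGuarded w ∧ actsOf w = ps }

/-- Test expressions without test variables. -/
def BExp.varFree {T : Type} : BExp T → Prop
  | .tru => True
  | .fls => True
  | .var _ => False
  | .or b c => BExp.varFree b ∧ BExp.varFree c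
  | .and b c => BExp.varFree b ∧ BExp.varFree c
  | .not b => BExp.varFree b

/-- KA expressions: KAT expressions with no test variables. -/
def KExp.testFree {A T : Type} : KExp A T → Prop
  | .test b => b.varFree
  | .act _ => True
  | .plus e f => KExp.testFree e ∧ KExp.testFree f
  | .seq e f => KExp.testFree e ∧ KExp.testFree f
  | .star e => KExp.testFree e

namespace GSI

variable {A T : Type}

/-- Flatten a list of (action, atom) pairs. -/
def gflat (l : List (A × Set T)) : GList A T :=
  l.flatMap fun pa => [Sum.inr pa.1, Sum.inl pa.2]

@[simp] lemma gflat_nil : gflat ([] : List (A × Set T)) = [] := rfl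

@[simp] lemma gflat_cons (pa : A × Set T) (l : List (A × Set T)) :
    gflat (pa :: l) = Sum.inr pa.1 :: Sum.inl pa.2 :: gflat l := rfl

lemma gflat_eq_nil {l : List (A × Set T)} (h : gflat l = []) : l = [] := by
  cases l with
  | nil => rfl
  | cons a l => simp at h

/-- atom at index i. -/
def atoms (α₀ : Set T) (rest : List (A × Set T)) (i : ℕ) : Set T :=
  (α₀ :: rest.map Prod.snd).getD i ∅

/-- segment of the guarded string from position i to position j. -/
def seg (α₀ : Set T) (rest : List (A × Set T)) (i j : ℕ) : GList A T :=
  Sum.inl (atoms α₀ rest i) :: gflat ((rest.drop i).take (j - i))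

lemma seg_self {α₀ : Set T} {rest : List (A × Set T)} {i j : ℕ} (h : j ≤ i) :
    seg α₀ rest i j = [Sum.inl (atoms α₀ rest i)] := by
  have : j - i = 0 := by omega
  simp [seg, this]

lemma atoms_succ {α₀ : Set T} {rest : List (A × Set T)} {i : ℕ} (h : i < rest.length) :
    atoms α₀ rest (i + 1) = (rest.get ⟨i, h⟩).2 := by
  simp [atoms, List.getD, List.getElem?_eq_getElem (by simpa using h :
    i < (rest.map Prod.snd).length)]

lemma seg_step {α₀ : Set T} {rest : List (A × Set T)} {i j : ℕ}
    (h1 : i < j) (h2 : i < rest.length) :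
    seg α₀ rest i j = Sum.inl (atoms α₀ rest i) :: Sum.inr (rest.get ⟨i, h2⟩).1 ::
      seg α₀ rest (i + 1) j := by
  have hd : rest.drop i = rest.get ⟨i, h2⟩ :: rest.drop (i + 1) :=
    (List.getElem_cons_drop h2).symm
  have ht : j - i = (j - (i + 1)) + 1 := by omega
  rw [seg, hd, ht, List.take_succ_cons, gflat_cons, seg, atoms_succ h2]

lemma seg_len_one {α₀ : Set T} {rest : List (A × Set T)} {i j : ℕ} {α : Set T}
    (hij : i ≤ j) (hj : j ≤ rest.length) (h : seg α₀ rest i j = [Sum.inl α]) :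
    j = i ∧ α = atoms α₀ rest i := by
  rw [seg] at h
  have h1 : Sum.inl (α := Set T) (β := A) (atoms α₀ rest i) = Sum.inl α ∧
      gflat ((rest.drop i).take (j - i)) = [] := by
    constructor <;> simp_all
  have h2 := gflat_eq_nil h1.2
  rw [List.take_eq_nil_iff] at h2
  have h3 : rest.drop i = [] → rest.length ≤ i := fun hh => by
    have := congrArg List.length hh
    simp at this
    omega
  constructor
  · rcases h2 with h2 | h2
    · omega
    · have := h3 h2; omega
  · exact (Sum.inl.inj h1.1).symm

/-- glue lemma: seg i j decomposes along an intermediate point k. -/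
lemma seg_glue {α₀ : Set T} {rest : List (A × Set T)} :
    ∀ (m i k j : ℕ), k - i ≤ m → i ≤ k → k ≤ j → k ≤ rest.length →
    ∃ w, seg α₀ rest i k = w ++ [Sum.inl (atoms α₀ rest k)] ∧
      seg α₀ rest i j = w ++ seg α₀ rest k j := by
  intro m
  induction m with
  | zero =>
    intro i k j h1 h2 _ _
    have : i = k := by omega
    subst this
    exact ⟨[], by simp [seg_self le_rfl], by simp⟩
  | succ m ih =>
    intro i k j h1 h2 h3 h4
    rcases Nat.eq_or_lt_of_le h2 with rfl | hik
    · exact ⟨[], by simp [seg_self le_rfl], by simp⟩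
    · have hi : i < rest.length := by omega
      obtain ⟨w, hw1, hw2⟩ := ih (i + 1) k j (by omega) (by omega) h3 h4
      refine ⟨Sum.inl (atoms α₀ rest i) :: Sum.inr (rest.get ⟨i, hi⟩).1 :: w, ?_, ?_⟩
      · rw [seg_step hik hi, hw1]; rfl
      · rw [seg_step (lt_of_lt_of_le hik h3) hi, hw2]; rfl

/-- split lemma: any guarded-prefix split of seg i j happens at an intermediate point. -/
lemma seg_split {α₀ : Set T} {rest : List (A × Set T)} :
    ∀ (l : GList A T), IsGuarded l → ∀ (w x : GList A T) (β : Set T) (i j : ℕ),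
      l = w ++ [Sum.inl β] → i ≤ j → j ≤ rest.length →
      seg α₀ rest i j = w ++ Sum.inl β :: x →
      ∃ k, i ≤ k ∧ k ≤ j ∧ β = atoms α₀ rest k ∧
        seg α₀ rest i k = w ++ [Sum.inl β] ∧ seg α₀ rest k j = Sum.inl β :: x := by
  intro l hl
  induction hl with
  | single γ =>
    intro w x β i j hw hij _ hseg
    match w, hw with
    | [], hw =>
      have hγ : γ = β := by simpa using hw
      subst hγ
      have hβ : γ = atoms α₀ rest i := by
        rw [seg] at hseg
        exact (Sum.inl.inj (List.head_eq_of_cons_eq hseg)).symm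
      exact ⟨i, le_rfl, hij, hβ, by simp [seg_self le_rfl, hβ], by simpa using hseg⟩
    | a :: w, hw =>
      exfalso
      have := congrArg List.length hw
      simp at this
  | cons γ p hl' ih =>
    intro w x β i j hw hij hj hseg
    -- w must start with inl γ :: inr p
    match w, hw with
    | [], hw => simp at hw
    | [a], hw => simp at hw
    | a :: b :: w', hw =>
      injection hw with ha hw
      injection hw with hb hw'
      subst ha
      subst hb
      -- seg i j starts with inl/inr, so i < j and i < rest.length
      have hne : gflat ((rest.drop i).take (j - i)) ≠ [] := by
        intro hnil
        rw [seg, hnil] at hseg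
        have := congrArg List.length hseg
        simp at this
      have hcond : i < j ∧ i < rest.length := by
        by_contra hc
        apply hne
        push_neg at hc
        rcases Nat.lt_or_ge i j with h | h
        · have : rest.drop i = [] := List.drop_eq_nil_of_le (hc h)
          simp [this]
        · have : j - i = 0 := by omega
          simp [this]
      obtain ⟨hij', hi⟩ := hcond
      rw [seg_step hij' hi] at hseg
      have h1 := List.cons.inj hseg
      have h2 := List.cons.inj h1.2
      obtain ⟨k, hk1, hk2, hk3, hk4, hk5⟩ :=
        ih w' x β (i + 1) j hw' (by omega) hj h2.2
      refine ⟨k, by omega, hk2, hk3, ?_, hk5⟩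
      rw [seg_step (by omega : i < k) hi, hk4, ← h1.1, ← h2.1]
      rfl

/-- concatenation of guarded strings fused at an atom is guarded. -/
lemma guard_append : ∀ (l : GList A T), IsGuarded l → ∀ (w x : GList A T) (α : Set T),
    l = w ++ [Sum.inl α] → IsGuarded (Sum.inl α :: x) →
    IsGuarded (w ++ Sum.inl α :: x) := by
  intro l hl
  induction hl with
  | single γ =>
    intro w x α hw hx
    cases w with
    | nil => simpa using hx
    | cons a w =>
      exfalso
      have := congrArg List.length hw
      simp at this
  | cons γ p hl' ih =>
    intro w x α hw hx
    match w, hw with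
    | [], hw => simp at hw
    | [a], hw => simp at hw
    | a :: b :: w', hw =>
      injection hw with ha hw
      injection hw with hb hw'
      subst ha
      subst hb
      exact IsGuarded.cons γ p (ih w' x α hw' hx)

lemma gcomp_guarded {L K : Set (GList A T)} (hL : ∀ w ∈ L, IsGuarded w)
    (hK : ∀ w ∈ K, IsGuarded w) : ∀ w ∈ gcomp L K, IsGuarded w := by
  rintro z ⟨w, α, x, h1, h2, rfl⟩
  exact guard_append _ (hL _ h1) w x α rfl (hK _ h2)

lemma gpow_guarded {L : Set (GList A T)} (hL : ∀ w ∈ L, IsGuarded w) :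
    ∀ n, ∀ w ∈ gpow L n, IsGuarded w := by
  intro n
  induction n with
  | zero => rintro w ⟨α, rfl⟩; exact IsGuarded.single α
  | succ n ih => exact gcomp_guarded hL ih

lemma lang_guarded : ∀ (e : KExp A T), ∀ w ∈ lang e, IsGuarded w := by
  intro e
  induction e with
  | test b => rintro w ⟨α, _, rfl⟩; exact IsGuarded.single α
  | act p => rintro w ⟨α, β, rfl⟩; exact IsGuarded.cons α p (IsGuarded.single β)
  | plus e f ihe ihf => rintro w (h | h); exacts [ihe w h, ihf w h]
  | seq e f ihe ihf => exact gcomp_guarded ihe ihf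
  | star e ihe =>
    rintro w hw
    simp only [lang, gstar, Set.mem_iUnion] at hw
    obtain ⟨n, hn⟩ := hw
    exact gpow_guarded ihe n w hn

lemma guarded_form {w : GList A T} (h : IsGuarded w) :
    ∃ (α₀ : Set T) (rest : List (A × Set T)), w = Sum.inl α₀ :: gflat rest := by
  induction h with
  | single α => exact ⟨α, [], rfl⟩
  | cons α p _ ih =>
    obtain ⟨α₁, rest', rfl⟩ := ih
    exact ⟨α, (p, α₁) :: rest', rfl⟩

lemma bsem_atomOf {S : Type} (τ : T → Set S) (b : BExp T) (s : S) :
    s ∈ bsem τ b ↔ b.holds (atomOf τ s) := by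
  induction b with
  | tru => simp [bsem, BExp.holds]
  | fls => simp [bsem, BExp.holds]
  | var t => simp [bsem, BExp.holds, atomOf]
  | or b c ihb ihc => simp [bsem, BExp.holds, ihb, ihc]
  | and b c ihb ihc => simp [bsem, BExp.holds, ihb, ihc]
  | not b ihb => simp [bsem, BExp.holds, ihb]

/-- the interpretation induced by a guarded string. -/
def myτ (α₀ : Set T) (rest : List (A × Set T)) (t : T) : Set (Fin (rest.length + 1)) :=
  { i | t ∈ atoms α₀ rest (i : ℕ) }

def myσ (rest : List (A × Set T)) (p : A) (i j : Fin (rest.length + 1)) : Prop :=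
  (j : ℕ) = (i : ℕ) + 1 ∧ (rest[(i : ℕ)]?).map Prod.fst = some p

lemma atomOf_myτ (α₀ : Set T) (rest : List (A × Set T)) (s : Fin (rest.length + 1)) :
    atomOf (myτ α₀ rest) s = atoms α₀ rest (s : ℕ) :=
  Set.ext fun _ => Iff.rfl

/-- MAIN LEMMA -/
theorem main (α₀ : Set T) (rest : List (A × Set T)) (e : KExp A T) :
    ∀ i j : Fin (rest.length + 1),
      rsem (myτ α₀ rest) (myσ rest) e i j ↔
        ((i : ℕ) ≤ (j : ℕ) ∧ seg α₀ rest (i : ℕ) (j : ℕ) ∈ lang e) := by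
  induction e with
  | test b =>
    intro i j
    constructor
    · rintro ⟨rfl, hb⟩
      rw [bsem_atomOf, atomOf_myτ] at hb
      exact ⟨le_rfl, atoms α₀ rest (i : ℕ), hb, seg_self le_rfl⟩
    · rintro ⟨hij, α, hα, hseg⟩
      obtain ⟨hji, rfl⟩ := seg_len_one hij (by omega) hseg
      have : i = j := Fin.ext (by omega)
      subst this
      exact ⟨rfl, (bsem_atomOf _ b i).2 (by rwa [atomOf_myτ])⟩
  | act p =>
    intro i j
    constructor
    · rintro ⟨hj, hp⟩
      rw [Option.map_eq_some_iff] at hp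
      obtain ⟨pa, hpa, hfst⟩ := hp
      have hi : (i : ℕ) < rest.length := by
        have := List.getElem?_eq_some_iff.mp hpa
        exact this.1
      have hget : rest.get ⟨(i : ℕ), hi⟩ = pa := by
        have := List.getElem?_eq_some_iff.mp hpa
        obtain ⟨h, hg⟩ := this
        exact hg
      refine ⟨by omega, atoms α₀ rest (i : ℕ), atoms α₀ rest ((i : ℕ) + 1), ?_⟩
      rw [seg_step (by omega : (i : ℕ) < (j : ℕ)) hi, hget, hfst,
        show ((j : ℕ)) = (i : ℕ) + 1 from hj, seg_self le_rfl]
    · rintro ⟨hij, α, β, hseg⟩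
      -- derive i < j and i < rest.length
      have hne : gflat ((rest.drop (i : ℕ)).take ((j : ℕ) - (i : ℕ))) ≠ [] := by
        intro hnil
        rw [seg, hnil] at hseg
        have := congrArg List.length hseg
        simp at this
      have hcond : (i : ℕ) < (j : ℕ) ∧ (i : ℕ) < rest.length := by
        by_contra hc
        apply hne
        push_neg at hc
        rcases Nat.lt_or_ge (i : ℕ) (j : ℕ) with h | h
        · have : rest.drop (i : ℕ) = [] := List.drop_eq_nil_of_le (hc h)
          simp [this]
        · have : (j : ℕ) - (i : ℕ) = 0 := by omega
          simp [this]
      obtain ⟨hlt, hi⟩ := hcond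
      rw [seg_step hlt hi] at hseg
      have h1 := List.cons.inj hseg
      have h2 := List.cons.inj h1.2
      obtain ⟨hji, hβ⟩ := seg_len_one (by omega) (by omega) h2.2
      refine ⟨by omega, ?_⟩
      rw [List.getElem?_eq_getElem hi]
      simpa using (Sum.inr.inj h2.1)
  | plus e f ihe ihf =>
    intro i j
    have he := ihe i j
    have hf := ihf i j
    show rsem _ _ e i j ∨ rsem _ _ f i j ↔ _ ∧ _ ∈ lang e ∪ lang f
    rw [he, hf]
    constructor
    · rintro (⟨h1, h2⟩ | ⟨h1, h2⟩)
      exacts [⟨h1, Or.inl h2⟩, ⟨h1, Or.inr h2⟩]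
    · rintro ⟨h1, h2 | h2⟩
      exacts [Or.inl ⟨h1, h2⟩, Or.inr ⟨h1, h2⟩]
  | seq e f ihe ihf =>
    intro i j
    constructor
    · rintro ⟨k, he, hf⟩
      obtain ⟨hik, hme⟩ := (ihe i k).1 he
      obtain ⟨hkj, hmf⟩ := (ihf k j).1 hf
      obtain ⟨w, hw1, hw2⟩ := seg_glue (α₀ := α₀) (rest := rest) ((k : ℕ) - (i : ℕ))
        (i : ℕ) (k : ℕ) (j : ℕ) le_rfl hik hkj (by omega)
      refine ⟨by omega, w, atoms α₀ rest (k : ℕ),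
        gflat ((rest.drop (k : ℕ)).take ((j : ℕ) - (k : ℕ))), ?_, ?_, ?_⟩
      · rwa [← hw1]
      · exact hmf
      · rw [hw2]; rfl
    · rintro ⟨hij, w, β, x, h1, h2, h3⟩
      obtain ⟨k, hk1, hk2, hk3, hk4, hk5⟩ :=
        seg_split (w ++ [Sum.inl β]) (lang_guarded e _ h1) w x β (i : ℕ) (j : ℕ)
          rfl hij (by omega) h3
      have hkf : k < rest.length + 1 := by omega
      refine ⟨⟨k, hkf⟩, (ihe i ⟨k, hkf⟩).2 ⟨hk1, by rw [hk4]; exact h1⟩,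
        (ihf ⟨k, hkf⟩ j).2 ⟨hk2, by rw [hk5]; exact h2⟩⟩
  | star e ihe =>
    intro i j
    show Relation.ReflTransGen _ i j ↔ _
    constructor
    · intro h
      induction h using Relation.ReflTransGen.head_induction_on with
      | refl =>
        refine ⟨le_rfl, ?_⟩
        simp only [lang, gstar, Set.mem_iUnion]
        exact ⟨0, atoms α₀ rest (j : ℕ), seg_self le_rfl⟩
      | head hab _ ih =>
        rename_i a b _
        obtain ⟨hbj, hmem⟩ := ih
        simp only [lang, gstar, Set.mem_iUnion] at hmem
        obtain ⟨m, hm⟩ := hmem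
        obtain ⟨hab', hmema⟩ := (ihe a b).1 hab
        obtain ⟨w, hw1, hw2⟩ := seg_glue (α₀ := α₀) (rest := rest)
          ((b : ℕ) - (a : ℕ)) (a : ℕ) (b : ℕ) (j : ℕ) le_rfl hab' hbj (by omega)
        refine ⟨by omega, ?_⟩
        simp only [lang, gstar, Set.mem_iUnion]
        refine ⟨m + 1, w, atoms α₀ rest (b : ℕ),
          gflat ((rest.drop (b : ℕ)).take ((j : ℕ) - (b : ℕ))), ?_, hm, ?_⟩
        · rwa [← hw1]
        · rw [hw2]; rfl
    · rintro ⟨hij, hmem⟩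
      simp only [lang, gstar, Set.mem_iUnion] at hmem
      obtain ⟨m, hm⟩ := hmem
      have aux : ∀ (m : ℕ) (i j : Fin (rest.length + 1)), (i : ℕ) ≤ (j : ℕ) →
          seg α₀ rest (i : ℕ) (j : ℕ) ∈ gpow (lang e) m →
          Relation.ReflTransGen (rsem (myτ α₀ rest) (myσ rest) e) i j := by
        intro m
        induction m with
        | zero =>
          rintro i j hij ⟨α, hα⟩
          obtain ⟨hji, _⟩ := seg_len_one hij (by omega) hα
          have : i = j := Fin.ext (by omega)
          subst this
          exact Relation.ReflTransGen.refl
        | succ m ihm =>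
          rintro i j hij ⟨w, β, x, h1, h2, h3⟩
          obtain ⟨k, hk1, hk2, hk3, hk4, hk5⟩ :=
            seg_split (w ++ [Sum.inl β]) (lang_guarded e _ h1) w x β (i : ℕ) (j : ℕ)
              rfl hij (by omega) h3
          have hkf : k < rest.length + 1 := by omega
          have hrsem : rsem (myτ α₀ rest) (myσ rest) e i ⟨k, hkf⟩ :=
            (ihe i ⟨k, hkf⟩).2 ⟨hk1, by rw [hk4]; exact h1⟩
          have htail : Relation.ReflTransGen (rsem (myτ α₀ rest) (myσ rest) e) ⟨k, hkf⟩ j :=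
            ihm ⟨k, hkf⟩ j hk2 (by rw [hk5]; exact h2)
          exact Relation.ReflTransGen.head hrsem htail
      exact aux m i j hij hm

lemma full_string (α₀ : Set T) (rest : List (A × Set T)) :
    seg α₀ rest 0 rest.length =
      Sum.inl α₀ :: rest.flatMap (fun pa => [Sum.inr pa.1, Sum.inl pa.2]) := by
  simp [seg, atoms, gflat]

lemma tau_eq (α₀ : Set T) (rest : List (A × Set T)) :
    (fun t => { i : Fin (rest.length + 1) |
        t ∈ (α₀ :: rest.map Prod.snd).get (Fin.cast (by simp) i) }) = myτ α₀ rest := by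
  funext t
  ext i
  have hi : (i : ℕ) < (α₀ :: rest.map Prod.snd).length := by simp [i.isLt]
  simp only [myτ, atoms, Set.mem_setOf_eq, List.getD_eq_getElem _ _ hi,
    List.get_eq_getElem, Fin.coe_cast]

theorem key (α₀ : Set T) (rest : List (A × Set T)) (e : KExp A T) :
    (Sum.inl α₀ :: rest.flatMap (fun pa => [Sum.inr pa.1, Sum.inl pa.2])) ∈ lang e ↔
      rsem (S := Fin (rest.length + 1))
        (fun t => { i : Fin (rest.length + 1) |
            t ∈ (α₀ :: rest.map Prod.snd).get (Fin.cast (by simp) i) })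
        (fun p i j => (j : ℕ) = (i : ℕ) + 1 ∧ (rest[(i : ℕ)]?).map Prod.fst = some p)
        e ⟨0, Nat.succ_pos _⟩ ⟨rest.length, Nat.lt_succ_self _⟩ := by
  rw [tau_eq]
  rw [show (fun (p : A) (i j : Fin (rest.length + 1)) =>
      (j : ℕ) = (i : ℕ) + 1 ∧ (rest[(i : ℕ)]?).map Prod.fst = some p) = myσ rest from rfl]
  rw [main α₀ rest e ⟨0, Nat.succ_pos _⟩ ⟨rest.length, Nat.lt_succ_self _⟩]
  simp [full_string]

end GSI

/-- every guarded string α₀ p₁ α₁ ... α_n (encoded by its first atom α₀ and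
the list `rest` of subsequent action/atom pairs) induces an interpretation on the states
{0,...,n} under which membership of the string in L(e) coincides with the pair (0,n)
being in R⟦e⟧; consequently, relational equivalence under all interpretations implies
language equivalence. -/
theorem guarded_string_interpretation {A T : Type} :
    (∀ (α₀ : Set T) (rest : List (A × Set T)) (e : KExp A T),
      (Sum.inl α₀ :: rest.flatMap (fun pa => [Sum.inr pa.1, Sum.inl pa.2])) ∈ lang e ↔
        rsem (S := Fin (rest.length + 1))
          (fun t => { i : Fin (rest.length + 1) |
              t ∈ (α₀ :: rest.map Prod.snd).get (Fin.cast (by simp) i) })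
          (fun p i j => (j : ℕ) = (i : ℕ) + 1 ∧ (rest[(i : ℕ)]?).map Prod.fst = some p)
          e ⟨0, Nat.succ_pos _⟩ ⟨rest.length, Nat.lt_succ_self _⟩) ∧
    (∀ e f : KExp A T,
      (∀ (S : Type) (τ : T → Set S) (σ : A → S → S → Prop), rsem τ σ e = rsem τ σ f) →
      lang e = lang f) := by
  constructor
  · exact fun α₀ rest e => GSI.key α₀ rest e
  · intro e f h
    have half : ∀ (e f : KExp A T),
        (∀ (S : Type) (τ : T → Set S) (σ : A → S → S → Prop), rsem τ σ e = rsem τ σ f) →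
        ∀ w ∈ lang e, w ∈ lang f := by
      intro e f h w hw
      obtain ⟨α₀, rest, rfl⟩ := GSI.guarded_form (GSI.lang_guarded e w hw)
      have h1 := (GSI.key α₀ rest e).1 hw
      rw [h] at h1
      exact (GSI.key α₀ rest f).2 h1
    ext w
    exact ⟨half e f h w, half f e (fun S τ σ => (h S τ σ).symm) w⟩
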